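/- Let N, m be positive integers, M a real N×N positive-definite diagonal matrix, Q a real m×N matrix, and D = QᵀQ. Let E > 0 and let u : ℝ → ℝ^N be twice differentiable with M·u''(t) = −D·u(t) for all t. Define ψ : ℝ → ℂ^(N+m) by ψ(t) = (1/√(2E))·(M^{1/2}u'(t), i·Q u(t)) (first N complex components M^{1/2}u'(t), last m components i·Qu(t)), and define the Hermitian matrix H = −[[0, M^{−1/2}Qᵀ],[Q M^{−1/2}, 0]] (an (N+m)×(N+m) block matrix). Then ψ is differentiable and ψ'(t) = −i·H·ψ(t) for all t. -/

import Mathlib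

open Matrix

/-- Lemma 1 (forward direction): if `M u'' = -D u` with `D = QᵀQ`, then the
encoded state `ψ(t) = (1/√(2E)) (M^{1/2} u'(t), i Q u(t))` satisfies `ψ' = -i H ψ` with
`H = -[[0, M^{-1/2}Qᵀ],[Q M^{-1/2}, 0]]`. -/
theorem lattice_to_schrodinger
    (N m : ℕ) (hN : 0 < N) (hm : 0 < m)
    (Mdiag : Fin N → ℝ) (hM : ∀ i, 0 < Mdiag i)
    (Q : Matrix (Fin m) (Fin N) ℝ)
    (E : ℝ) (hE : 0 < E)
    (u u' u'' : ℝ → Fin N → ℝ)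
    (hu : ∀ t i, HasDerivAt (fun s => u s i) (u' t i) t)
    (hu' : ∀ t i, HasDerivAt (fun s => u' s i) (u'' t i) t)
    (hode : ∀ t, (Matrix.diagonal Mdiag) *ᵥ (u'' t) = -((Qᵀ * Q) *ᵥ (u t)))
    (ψ : ℝ → (Fin N ⊕ Fin m) → ℂ)
    (hψ : ∀ t, ψ t = fun x =>
      (1 / (Real.sqrt (2 * E) : ℂ)) * (Sum.elim
        (fun i : Fin N => ((Real.sqrt (Mdiag i) * u' t i : ℝ) : ℂ))
        (fun j : Fin m => Complex.I * (((Q *ᵥ (u t)) j : ℝ) : ℂ)) x))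
    (H : Matrix (Fin N ⊕ Fin m) (Fin N ⊕ Fin m) ℂ)
    (hH : H = -(Matrix.fromBlocks 0
      (((Matrix.diagonal fun i => (Real.sqrt (Mdiag i))⁻¹) * Qᵀ).map (fun x : ℝ => (x : ℂ)))
      ((Q * (Matrix.diagonal fun i => (Real.sqrt (Mdiag i))⁻¹)).map (fun x : ℝ => (x : ℂ)))
      0)) :
    ∀ t x, HasDerivAt (fun s => ψ s x) ((((-Complex.I) • (H *ᵥ ψ t))) x) t := by
  intro t x
  set c : ℂ := (1 / (Real.sqrt (2 * E) : ℂ)) with hc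
  have hval : ∀ y, (((-Complex.I) • (H *ᵥ ψ t))) y = Sum.elim
      (fun i : Fin N => c * ((Real.sqrt (Mdiag i) * u'' t i : ℝ) : ℂ))
      (fun j : Fin m => c * (Complex.I * (((Q *ᵥ (u' t)) j : ℝ) : ℂ))) y := by
    intro y
    subst hH
    cases y with
    | inl i =>
      have hodei : Mdiag i * u'' t i = -∑ j, Q j i * ∑ k, Q j k * u t k := by
        have h := congrFun (hode t) i
        have l : (Matrix.diagonal Mdiag *ᵥ u'' t) i = Mdiag i * u'' t i :=
          Matrix.mulVec_diagonal _ _ _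
        have r : ((Qᵀ * Q) *ᵥ u t) i = ∑ j, Q j i * ∑ k, Q j k * u t k := by
          rw [← Matrix.mulVec_mulVec]
          simp [Matrix.mulVec, dotProduct, Matrix.transpose_apply]
        rw [l, Pi.neg_apply, r] at h
        exact h
      have h2 : (∑ j, Q j i * ∑ k, Q j k * u t k) = -(Mdiag i * u'' t i) := by
        rw [hodei, neg_neg]
      have key : (∑ j : Fin m, ((Q j i : ℝ) : ℂ) * ∑ k, ((Q j k : ℝ) : ℂ) * ((u t k : ℝ) : ℂ))
          = -(((Mdiag i : ℝ) : ℂ) * ((u'' t i : ℝ) : ℂ)) := by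
        have := congrArg (fun r : ℝ => (r : ℂ)) h2
        push_cast at this
        exact this
      have hsq : ((Real.sqrt (Mdiag i) : ℝ) : ℂ)⁻¹ * ((Mdiag i : ℝ) : ℂ)
          = ((Real.sqrt (Mdiag i) : ℝ) : ℂ) := by
        have hr : (Real.sqrt (Mdiag i))⁻¹ * Mdiag i = Real.sqrt (Mdiag i) := by
          rw [← Real.mul_self_sqrt (hM i).le]
          field_simp
          rw [Real.sqrt_sq (Real.sqrt_nonneg _), sq, mul_div_assoc, div_self (Real.sqrt_pos.mpr (hM i)).ne', mul_one]
        have := congrArg (fun r : ℝ => (r : ℂ)) hr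
        push_cast at this
        exact this
      simp only [hψ, Pi.smul_apply, Matrix.mulVec, dotProduct, Fintype.sum_sum_type,
        Matrix.neg_apply, Matrix.fromBlocks_apply₁₁, Matrix.fromBlocks_apply₁₂,
        Matrix.map_apply, Matrix.diagonal_mul, Matrix.transpose_apply,
        Sum.elim_inl, Sum.elim_inr, Matrix.zero_apply, smul_eq_mul,
        neg_zero, zero_mul, Finset.sum_const_zero, zero_add]
      push_cast
      rw [show (∑ j : Fin m, (-(((Real.sqrt (Mdiag i) : ℝ) : ℂ)⁻¹ * ((Q j i : ℝ) : ℂ))) *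
            (c * (Complex.I * ∑ k, ((Q j k : ℝ) : ℂ) * ((u t k : ℝ) : ℂ))))
          = (-(Complex.I * c * ((Real.sqrt (Mdiag i) : ℝ) : ℂ)⁻¹)) *
            ∑ j : Fin m, ((Q j i : ℝ) : ℂ) * ∑ k, ((Q j k : ℝ) : ℂ) * ((u t k : ℝ) : ℂ) from by
        rw [Finset.mul_sum]; exact Finset.sum_congr rfl fun j _ => by ring]
      rw [key]
      linear_combination (-(c * ((Real.sqrt (Mdiag i) : ℝ) : ℂ)⁻¹ * ((Mdiag i : ℝ) : ℂ) *
        ((u'' t i : ℝ) : ℂ))) * Complex.I_mul_I + (c * ((u'' t i : ℝ) : ℂ)) * hsq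
    | inr j =>
      simp only [hψ, Pi.smul_apply, Matrix.mulVec, dotProduct, Fintype.sum_sum_type,
        Matrix.neg_apply, Matrix.fromBlocks_apply₂₁, Matrix.fromBlocks_apply₂₂,
        Matrix.map_apply, Matrix.mul_diagonal, Matrix.transpose_apply,
        Sum.elim_inl, Sum.elim_inr, Matrix.zero_apply, smul_eq_mul,
        neg_zero, zero_mul, Finset.sum_const_zero, add_zero]
      push_cast
      simp only [Finset.mul_sum]
      refine Finset.sum_congr rfl fun k _ => ?_
      have hsq : ((Real.sqrt (Mdiag k) : ℝ) : ℂ)⁻¹ * ((Real.sqrt (Mdiag k) : ℝ) : ℂ) = 1 := by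
        have hr : (Real.sqrt (Mdiag k))⁻¹ * Real.sqrt (Mdiag k) = 1 :=
          inv_mul_cancel₀ (ne_of_gt (Real.sqrt_pos.mpr (hM k)))
        have := congrArg (fun r : ℝ => (r : ℂ)) hr
        push_cast at this
        exact this
      linear_combination (Complex.I * ((Q j k : ℝ) : ℂ) * c * ((u' t k : ℝ) : ℂ)) * hsq
  rw [hval]
  simp only [hψ]
  cases x with
  | inl i =>
    simp only [Sum.elim_inl]
    exact (((hu' t i).const_mul (Real.sqrt (Mdiag i))).ofReal_comp).const_mul c
  | inr j =>
    simp only [Sum.elim_inr]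
    have h1 : HasDerivAt (fun s => (Q *ᵥ u s) j) ((Q *ᵥ u' t) j) t := by
      simp only [Matrix.mulVec, dotProduct]
      exact HasDerivAt.fun_sum fun i _ => (hu t i).const_mul (Q j i)
    exact ((h1.ofReal_comp).const_mul Complex.I).const_mul c
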